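/- arXiv:2205.09937 — 8 statements merged into one kernel-verified Lean document; each statement's English description precedes it below -/
import Mathlib

section
/- Let U be a uninorm with identity element e and (M, ∘) a monoid with identity element e_M. If U is disjunctive (i.e., U(0,1) = 1), then a fuzzy subset σ : M → [0,1] is a U-fuzzy submonoid of M if and only if σ(x) = 1 for all x ∈ M. -/
/-- If a uninorm `U` is disjunctive (`U 0 1 = 1`), then `σ` is a `U`-fuzzy
submonoid of a monoid `M` iff `σ ≡ 1`. -/
theorem disjunctive_uninorm_fuzzy_submonoid_iff
    {M : Type*} [Monoid M]
    (U : unitInterval → unitInterval → unitInterval)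
    (hUcomm : ∀ x y, U x y = U y x)
    (hUassoc : ∀ x y z, U (U x y) z = U x (U y z))
    (hUmono : ∀ a₁ a₂ b₁ b₂ : unitInterval, a₁ ≤ a₂ → b₁ ≤ b₂ → U a₁ b₁ ≤ U a₂ b₂)
    (e : unitInterval) (hUe : ∀ x, U x e = x)
    (hdisj : U 0 1 = 1)
    (σ : M → unitInterval) :
    ((∀ x y : M, U (σ x) (σ y) ≤ σ (x * y)) ∧ σ (1 : M) = 1) ↔
      ∀ x : M, σ x = 1 := by
  constructor
  · rintro ⟨hsub, hone⟩ x
    have h1 : (1 : unitInterval) ≤ U (σ x) (σ 1) := by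
      calc (1 : unitInterval) = U 0 1 := hdisj.symm
        _ ≤ U (σ x) (σ 1) := hUmono _ _ _ _ (σ x).2.1 (le_of_eq hone.symm)
    have := le_trans h1 (hsub x 1)
    rw [mul_one] at this
    exact le_antisymm unitInterval.le_one' this
  · intro h
    refine ⟨fun x y => ?_, h 1⟩
    rw [h (x * y)]
    exact unitInterval.le_one'
end

section
/- Let F_M be the nullnorm with absorbing element k given by F_M(x,y) = k·S(x/k, y/k) if (x,y) ∈ [0,k]², F_M(x,y) = k + (1−k)·min((x−k)/(1−k), (y−k)/(1−k)) if (x,y) ∈ (k,1]², and F_M(x,y) = k otherwise, where S is any t-conorm. A fuzzy subset σ : [0,1] → [0,1] is an F_M-fuzzy submonoid of ([0,1], min) if and only if σ(1) = 1 and σ(x) ≥ k for all x ∈ [0,1]. -/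
/-- A fuzzy subset `σ` is an `F_M`-fuzzy submonoid of `([0,1], min)` iff
`σ 1 = 1` and `σ x ≥ k` for all `x ∈ [0,1]`, where `F_M` is the nullnorm with
absorbing element `k` built from a t-conorm `S` on `[0,k]²` and `min` on `(k,1]²`. -/
theorem FM_fuzzy_submonoid_of_min_iff
    (k : ℝ) (hk : k ∈ Set.Ioo (0:ℝ) 1)
    (S : ℝ → ℝ → ℝ)
    (hSmap : ∀ x ∈ Set.Icc (0:ℝ) 1, ∀ y ∈ Set.Icc (0:ℝ) 1, S x y ∈ Set.Icc (0:ℝ) 1)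
    (hScomm : ∀ x y, S x y = S y x)
    (hSassoc : ∀ x y z, S (S x y) z = S x (S y z))
    (hSmono : ∀ x₁ x₂ y₁ y₂ : ℝ, x₁ ≤ x₂ → y₁ ≤ y₂ → S x₁ y₁ ≤ S x₂ y₂)
    (hS0 : ∀ x ∈ Set.Icc (0:ℝ) 1, S x 0 = x)
    (FM : ℝ → ℝ → ℝ)
    (hFM : ∀ x y, FM x y =
      if x ≤ k ∧ y ≤ k then k * S (x / k) (y / k)
      else if k < x ∧ k < y then k + (1 - k) * min ((x - k) / (1 - k)) ((y - k) / (1 - k))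
      else k)
    (σ : ℝ → ℝ) (hσ : ∀ x ∈ Set.Icc (0:ℝ) 1, σ x ∈ Set.Icc (0:ℝ) 1) :
    ((∀ x ∈ Set.Icc (0:ℝ) 1, ∀ y ∈ Set.Icc (0:ℝ) 1, FM (σ x) (σ y) ≤ σ (min x y)) ∧
        σ 1 = 1) ↔
      (σ 1 = 1 ∧ ∀ x ∈ Set.Icc (0:ℝ) 1, k ≤ σ x) := by
  obtain ⟨hk0, hk1⟩ := hk
  constructor
  · rintro ⟨hsub, h1⟩
    refine ⟨h1, fun x hx => ?_⟩
    have h := hsub x hx 1 ⟨zero_le_one, le_refl 1⟩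
    rw [h1, min_eq_left hx.2] at h
    by_cases hle : σ x ≤ k
    · have : FM (σ x) 1 = k := by
        rw [hFM]
        rw [if_neg (by rintro ⟨_, h2⟩; linarith), if_neg (by rintro ⟨h2, _⟩; linarith)]
      linarith [this ▸ h]
    · linarith
  · rintro ⟨h1, hge⟩
    refine ⟨fun x hx y hy => ?_, h1⟩
    have hkx := hge x hx
    have hky := hge y hy
    have hσm : σ (min x y) = σ x ∨ σ (min x y) = σ y := by
      rcases min_choice x y with h | h <;> [left; right] <;> rw [h]
    have hkm : k ≤ σ (min x y) := by rcases hσm with h | h <;> rw [h] <;> assumption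
    rw [hFM]
    split_ifs with hc1 hc2
    · -- σ x ≤ k and σ y ≤ k, so both equal k
      have hx' : σ x = k := le_antisymm hc1.1 hkx
      have hy' : σ y = k := le_antisymm hc1.2 hky
      have hS11 : S 1 1 = 1 := by
        have h1' : (1:ℝ) ≤ S 1 1 := by
          calc (1:ℝ) = S 1 0 := (hS0 1 ⟨zero_le_one, le_refl 1⟩).symm
          _ ≤ S 1 1 := hSmono 1 1 0 1 le_rfl zero_le_one
        have h2' := (hSmap 1 ⟨zero_le_one, le_refl 1⟩ 1 ⟨zero_le_one, le_refl 1⟩).2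
        linarith
      rw [hx', hy', div_self (ne_of_gt hk0), hS11, mul_one]
      exact hkm
    · -- both > k : value is min (σ x) (σ y)
      have h1k : (0:ℝ) < 1 - k := by linarith
      have : k + (1 - k) * min ((σ x - k) / (1 - k)) ((σ y - k) / (1 - k))
          = min (σ x) (σ y) := by
        rw [mul_min_of_nonneg _ _ (le_of_lt h1k),
          mul_div_cancel₀ _ (ne_of_gt h1k), mul_div_cancel₀ _ (ne_of_gt h1k)]
        rcases le_total (σ x) (σ y) with h | h
        · rw [min_eq_left (by linarith), min_eq_left h]; ring
        · rw [min_eq_right (by linarith), min_eq_right h]; ring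
      rw [this]
      rcases hσm with h | h <;> rw [h]
      · exact min_le_left _ _
      · exact min_le_right _ _
    · exact hkm
end

section
/- Let F_M be the nullnorm with absorbing element k ∈ (0,1) given by F_M(x,y) = k·S(x/k, y/k) on [0,k]², F_M(x,y) = k + (1−k)·min((x−k)/(1−k),(y−k)/(1−k)) on (k,1]², and k otherwise, where S is a t-conorm. A fuzzy subset σ : [0,1] → [0,1] is an F_M-fuzzy submonoid of ([0,1], max) if and only if σ(0) = 1 and σ(x) ≥ k for all x ∈ [0,1]. -/
/-- A fuzzy subset `σ` is an `F_M`-fuzzy submonoid of `([0,1], max)` iff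
`σ 0 = 1` and `σ x ≥ k` for all `x ∈ [0,1]`, where `F_M` is the nullnorm with
absorbing element `k` built from a t-conorm `S` on `[0,k]²` and `min` on `(k,1]²`. -/
theorem FM_fuzzy_submonoid_of_max_iff
    (k : ℝ) (hk : k ∈ Set.Ioo (0:ℝ) 1)
    (S : ℝ → ℝ → ℝ)
    (hSmap : ∀ x ∈ Set.Icc (0:ℝ) 1, ∀ y ∈ Set.Icc (0:ℝ) 1, S x y ∈ Set.Icc (0:ℝ) 1)
    (hScomm : ∀ x y, S x y = S y x)
    (hSassoc : ∀ x y z, S (S x y) z = S x (S y z))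
    (hSmono : ∀ x₁ x₂ y₁ y₂ : ℝ, x₁ ≤ x₂ → y₁ ≤ y₂ → S x₁ y₁ ≤ S x₂ y₂)
    (hS0 : ∀ x ∈ Set.Icc (0:ℝ) 1, S x 0 = x)
    (FM : ℝ → ℝ → ℝ)
    (hFM : ∀ x y, FM x y =
      if x ≤ k ∧ y ≤ k then k * S (x / k) (y / k)
      else if k < x ∧ k < y then k + (1 - k) * min ((x - k) / (1 - k)) ((y - k) / (1 - k))
      else k)
    (σ : ℝ → ℝ) (hσ : ∀ x ∈ Set.Icc (0:ℝ) 1, σ x ∈ Set.Icc (0:ℝ) 1) :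
    ((∀ x ∈ Set.Icc (0:ℝ) 1, ∀ y ∈ Set.Icc (0:ℝ) 1, FM (σ x) (σ y) ≤ σ (max x y)) ∧
        σ 0 = 1) ↔
      (σ 0 = 1 ∧ ∀ x ∈ Set.Icc (0:ℝ) 1, k ≤ σ x) := by
  obtain ⟨hk0, hk1⟩ := hk
  have h1k : (0:ℝ) < 1 - k := by linarith
  constructor
  · rintro ⟨hsub, h0⟩
    refine ⟨h0, fun x hx => ?_⟩
    have h01 : (0:ℝ) ∈ Set.Icc (0:ℝ) 1 := by constructor <;> norm_num
    have hle := hsub x hx 0 h01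
    rw [h0] at hle
    rw [max_eq_left hx.1] at hle
    rw [hFM] at hle
    by_cases hc : σ x ≤ k ∧ (1:ℝ) ≤ k
    · linarith [hc.2]
    · rw [if_neg hc] at hle
      by_cases hc2 : k < σ x ∧ k < 1
      · linarith [hc2.1]
      · rw [if_neg hc2] at hle; exact hle
  · rintro ⟨h0, hge⟩
    refine ⟨fun x hx y hy => ?_, h0⟩
    have hmx : max x y ∈ Set.Icc (0:ℝ) 1 :=
      ⟨le_trans hx.1 (le_max_left x y), max_le hx.2 hy.2⟩
    have hkx := hge x hx
    have hky := hge y hy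
    have hkm := hge _ hmx
    rw [hFM]
    by_cases hc : σ x ≤ k ∧ σ y ≤ k
    · rw [if_pos hc]
      have hx' : σ x = k := le_antisymm hc.1 hkx
      have hy' : σ y = k := le_antisymm hc.2 hky
      rw [hx', hy', div_self (ne_of_gt hk0)]
      have hS : S 1 1 ≤ 1 :=
        (hSmap 1 ⟨zero_le_one, le_refl 1⟩ 1 ⟨zero_le_one, le_refl 1⟩).2
      nlinarith
    · rw [if_neg hc]
      by_cases hc2 : k < σ x ∧ k < σ y
      · rw [if_pos hc2]
        rcases max_cases x y with ⟨hm, _⟩ | ⟨hm, _⟩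
        · rw [hm]
          have hmin : min ((σ x - k)/(1-k)) ((σ y - k)/(1-k)) ≤ (σ x - k)/(1-k) :=
            min_le_left _ _
          have h2 : (1-k) * ((σ x - k)/(1-k)) = σ x - k := by field_simp
          nlinarith [hmin]
        · rw [hm]
          have hmin : min ((σ x - k)/(1-k)) ((σ y - k)/(1-k)) ≤ (σ y - k)/(1-k) :=
            min_le_right _ _
          have h2 : (1-k) * ((σ y - k)/(1-k)) = σ y - k := by field_simp
          nlinarith [hmin]
      · rw [if_neg hc2]; exact hkm
end

section
/- Let A be a binary aggregation operator, E an A-indistinguishability operator on M separating points, and (M, ∘̃) an A-vague monoid with respect to E. Then the identity element of (M, ∘̃) is unique: if e and e' both satisfy ∘̃(e,x,x) = ∘̃(x,e,x) = 1 and ∘̃(e',x,x) = ∘̃(x,e',x) = 1 for all x ∈ M, then e = e'. -/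
/-- In an `A`-vague monoid with respect to an `A`-indistinguishability operator
separating points, the identity element is unique. -/
theorem vague_monoid_identity_unique
    {M : Type*}
    (A : unitInterval → unitInterval → unitInterval)
    (hA0 : A 0 0 = 0) (hA1 : A 1 1 = 1)
    (hAmono : ∀ a₁ a₂ b₁ b₂ : unitInterval, a₁ ≤ a₂ → b₁ ≤ b₂ → A a₁ b₁ ≤ A a₂ b₂)
    (E : M → M → unitInterval)
    (hErefl : ∀ x, E x x = 1) (hEsymm : ∀ x y, E x y = E y x)
    (hEtrans : ∀ x y z, A (E x y) (E y z) ≤ E x z)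
    (hsep : ∀ x y, E x y = 1 → x = y)
    (o : M → M → M → unitInterval)
    (hext : ∀ x y z x' y' z',
      A (o x y z) (A (E x x') (A (E y y') (E z z'))) ≤ o x' y' z')
    (hcomp : ∀ x y z z', A (o x y z) (o x y z') ≤ E z z')
    (hex : ∀ x y, ∃ z, o x y z = 1)
    (hassoc : ∀ x y z d m q w,
      A (o y z d) (A (o x d m) (A (o x y q) (o q z w))) ≤ E m w) :
    ∀ e e' : M, (∀ x, o e x x = 1 ∧ o x e x = 1) →
      (∀ x, o e' x x = 1 ∧ o x e' x = 1) → e = e' := by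
  intro e e' he he'
  have h := hcomp e e' e' e
  rw [(he e').1, (he' e).2, hA1] at h
  exact (hsep e' e (le_antisymm (E e' e).2.2 h)).symm
end

section
/- Let A be a binary aggregation operator that is associative and commutative, ∘ a binary operation on M, and E an A-indistinguishability operator on M that is regular with respect to ∘ (i.e., E(x,y) ≤ E(x∘z, y∘z) and E(x,y) ≤ E(z∘x, z∘y) for all x,y,z). Define ∘̃(x,y,z) = E(x∘y, z). Then ∘̃ is an A-vague binary operation on M; that is, (1) A(∘̃(x,y,z), A(E(x,x'), A(E(y,y'), E(z,z')))) ≤ ∘̃(x',y',z'); (2) A(∘̃(x,y,z), ∘̃(x,y,z')) ≤ E(z,z'); (3) for all x,y there exists z with ∘̃(x,y,z) = 1. -/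
/-- If `E` is a regular `A`-indistinguishability operator with respect to a binary
operation `∘` on `M`, then `o x y z := E (x ∘ y) z` is an `A`-vague binary
operation on `M`. -/
theorem regular_indistinguishability_gives_vague_operation
    {M : Type*}
    (A : unitInterval → unitInterval → unitInterval)
    (hA0 : A 0 0 = 0) (hA1 : A 1 1 = 1)
    (hAmono : ∀ a₁ a₂ b₁ b₂ : unitInterval, a₁ ≤ a₂ → b₁ ≤ b₂ → A a₁ b₁ ≤ A a₂ b₂)
    (hAassoc : ∀ a b c, A (A a b) c = A a (A b c))
    (hAcomm : ∀ a b, A a b = A b a)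
    (op : M → M → M)
    (E : M → M → unitInterval)
    (hErefl : ∀ x, E x x = 1) (hEsymm : ∀ x y, E x y = E y x)
    (hEtrans : ∀ x y z, A (E x y) (E y z) ≤ E x z)
    (hreg₁ : ∀ x y z, E x y ≤ E (op x z) (op y z))
    (hreg₂ : ∀ x y z, E x y ≤ E (op z x) (op z y))
    (o : M → M → M → unitInterval)
    (ho : ∀ x y z, o x y z = E (op x y) z) :
    (∀ x y z x' y' z',
        A (o x y z) (A (E x x') (A (E y y') (E z z'))) ≤ o x' y' z') ∧
    (∀ x y z z', A (o x y z) (o x y z') ≤ E z z') ∧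
    (∀ x y, ∃ z, o x y z = 1) := by
  refine ⟨?_, ?_, ?_⟩
  · intro x y z x' y' z'
    rw [ho, ho]
    set a := E (op x y) z
    set b := E x x'
    set c := E y y'
    set d := E z z'
    have rearr : A a (A b (A c d)) = A (A b c) (A a d) := by
      rw [hAassoc b c, ← hAassoc c a d, hAcomm c a, hAassoc a c d,
        ← hAassoc b a, hAcomm b a, hAassoc a b]
    have hbc : A b c ≤ E (op x' y') (op x y) := by
      have h1 : b ≤ E (op x y) (op x' y) := hreg₁ x x' y
      have h2 : c ≤ E (op x' y) (op x' y') := hreg₂ y y' x'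
      have := le_trans (hAmono _ _ _ _ h1 h2) (hEtrans (op x y) (op x' y) (op x' y'))
      rwa [hEsymm]
    have had : A a d ≤ E (op x y) z' := hEtrans (op x y) z z'
    calc A a (A b (A c d)) = A (A b c) (A a d) := rearr
      _ ≤ A (E (op x' y') (op x y)) (E (op x y) z') := hAmono _ _ _ _ hbc had
      _ ≤ E (op x' y') z' := hEtrans _ _ _
  · intro x y z z'
    rw [ho, ho]
    calc A (E (op x y) z) (E (op x y) z')
        = A (E z (op x y)) (E (op x y) z') := by rw [hEsymm]
      _ ≤ E z z' := hEtrans _ _ _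
  · intro x y
    exact ⟨op x y, by rw [ho, hErefl]⟩
end

section
/- Let A be an associative, commutative aggregation operator, (M, ∘) a monoid, and E a regular A-indistinguishability operator on M with respect to ∘. Define ∘̃(x,y,z) = E(x∘y, z). Then (M, ∘̃) satisfies the vague associativity law: A(∘̃(y,z,d), A(∘̃(x,d,m), A(∘̃(x,y,q), ∘̃(q,z,w)))) ≤ E(m,w) for all x,y,z,d,m,q,w ∈ M, and the monoid identity e satisfies ∘̃(e,x,x) = ∘̃(x,e,x) = 1 for all x. -/
/-- If `(M, ∘)` is a monoid and `E` is a regular `A`-indistinguishability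
operator, then `o x y z := E (x * y) z` makes `(M, o)` an `A`-vague monoid:
the vague associativity law holds and the monoid identity is an identity for `o`. -/
theorem regular_indistinguishability_gives_vague_monoid
    {M : Type*} [Monoid M]
    (A : unitInterval → unitInterval → unitInterval)
    (hA0 : A 0 0 = 0) (hA1 : A 1 1 = 1)
    (hAmono : ∀ a₁ a₂ b₁ b₂ : unitInterval, a₁ ≤ a₂ → b₁ ≤ b₂ → A a₁ b₁ ≤ A a₂ b₂)
    (hAassoc : ∀ a b c, A (A a b) c = A a (A b c))
    (hAcomm : ∀ a b, A a b = A b a)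
    (E : M → M → unitInterval)
    (hErefl : ∀ x, E x x = 1) (hEsymm : ∀ x y, E x y = E y x)
    (hEtrans : ∀ x y z, A (E x y) (E y z) ≤ E x z)
    (hreg₁ : ∀ x y z : M, E x y ≤ E (x * z) (y * z))
    (hreg₂ : ∀ x y z : M, E x y ≤ E (z * x) (z * y))
    (o : M → M → M → unitInterval)
    (ho : ∀ x y z, o x y z = E (x * y) z) :
    (∀ x y z d m q w : M,
        A (o y z d) (A (o x d m) (A (o x y q) (o q z w))) ≤ E m w) ∧
    (∀ x : M, o 1 x x = 1 ∧ o x 1 x = 1) := by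
  refine ⟨?_, fun x => ⟨by rw [ho, one_mul, hErefl], by rw [ho, mul_one, hErefl]⟩⟩
  intro x y z d m q w
  simp only [ho]
  set X := x * (y * z) with hX
  have h1 : E (x * y) q ≤ E X (q * z) := by
    rw [hX, ← mul_assoc]; exact hreg₁ _ _ _
  calc A (E (y * z) d) (A (E (x * d) m) (A (E (x * y) q) (E (q * z) w)))
      ≤ A (E X (x * d)) (A (E (x * d) m) (A (E X (q * z)) (E (q * z) w))) :=
        hAmono _ _ _ _ (hreg₂ _ _ _)
          (hAmono _ _ _ _ le_rfl (hAmono _ _ _ _ h1 le_rfl))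
    _ ≤ A (E X (x * d)) (A (E (x * d) m) (E X w)) :=
        hAmono _ _ _ _ le_rfl (hAmono _ _ _ _ le_rfl (hEtrans _ _ _))
    _ = A (A (E X (x * d)) (E (x * d) m)) (E X w) := (hAassoc _ _ _).symm
    _ ≤ A (E X m) (E X w) := hAmono _ _ _ _ (hEtrans _ _ _) le_rfl
    _ = A (E m X) (E X w) := by rw [hEsymm]
    _ ≤ E m w := hEtrans _ _ _
end

section
/- Let E be an A-indistinguishability operator on M separating points and (M, ∘̃) an A-vague monoid with associated monoid (M, ∘) (where x∘y is the unique z with ∘̃(x,y,z)=1, assuming ∘̃(x,y,z)=E(x∘y,z) with E regular). Then (M, ∘̃) is commutative (i.e., A(∘̃(x,y,m), ∘̃(y,x,w)) ≤ E(m,w) for all x,y,m,w) if and only if (M, ∘) is commutative. -/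
/-- The `A`-vague monoid `(M, o)` with `o x y z = E (x * y) z` is commutative iff
the associated monoid `(M, *)` is commutative. -/
theorem vague_monoid_commutative_iff
    {M : Type*} [Monoid M]
    (A : unitInterval → unitInterval → unitInterval)
    (hA0 : A 0 0 = 0) (hA1 : A 1 1 = 1)
    (hAmono : ∀ a₁ a₂ b₁ b₂ : unitInterval, a₁ ≤ a₂ → b₁ ≤ b₂ → A a₁ b₁ ≤ A a₂ b₂)
    (hAassoc : ∀ a b c, A (A a b) c = A a (A b c))
    (hAcomm : ∀ a b, A a b = A b a)
    (E : M → M → unitInterval)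
    (hErefl : ∀ x, E x x = 1) (hEsymm : ∀ x y, E x y = E y x)
    (hEtrans : ∀ x y z, A (E x y) (E y z) ≤ E x z)
    (hsep : ∀ x y, E x y = 1 → x = y)
    (hreg₁ : ∀ x y z : M, E x y ≤ E (x * z) (y * z))
    (hreg₂ : ∀ x y z : M, E x y ≤ E (z * x) (z * y))
    (o : M → M → M → unitInterval)
    (ho : ∀ x y z, o x y z = E (x * y) z) :
    (∀ x y m w : M, A (o x y m) (o y x w) ≤ E m w) ↔
      (∀ x y : M, x * y = y * x) := by
  constructor
  · intro h x y
    apply hsep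
    have := h x y (x * y) (y * x)
    rw [ho, ho, hErefl, hErefl, hA1] at this
    exact le_antisymm le_top this
  · intro h x y m w
    rw [ho, ho, h y x]
    calc A (E (x * y) m) (E (x * y) w)
        = A (E m (x * y)) (E (x * y) w) := by rw [hEsymm]
      _ ≤ E m w := hEtrans m (x * y) w
end

section
/- Let A be an associative commutative aggregation operator, (M, ∘) a monoid with identity e, and E a regular A-indistinguishability operator on M with respect to ∘. Then the fuzzy subset σ : M → [0,1] defined by σ(x) = E(x, e) is an A-fuzzy submonoid of (M, ∘); that is, σ(e) = 1 and A(σ(x), σ(y)) ≤ σ(x ∘ y) for all x, y ∈ M. -/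
/-- The kernel `σ x = E x 1` of the identity map on an `A`-vague monoid coming
from a regular `A`-indistinguishability operator `E` on a monoid `M` is an
`A`-fuzzy submonoid of `M`. -/
theorem kernel_of_id_is_fuzzy_submonoid
    {M : Type*} [Monoid M]
    (A : unitInterval → unitInterval → unitInterval)
    (hA0 : A 0 0 = 0) (hA1 : A 1 1 = 1)
    (hAmono : ∀ a₁ a₂ b₁ b₂ : unitInterval, a₁ ≤ a₂ → b₁ ≤ b₂ → A a₁ b₁ ≤ A a₂ b₂)
    (hAassoc : ∀ a b c, A (A a b) c = A a (A b c))
    (hAcomm : ∀ a b, A a b = A b a)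
    (E : M → M → unitInterval)
    (hErefl : ∀ x, E x x = 1) (hEsymm : ∀ x y, E x y = E y x)
    (hEtrans : ∀ x y z, A (E x y) (E y z) ≤ E x z)
    (hreg₁ : ∀ x y z : M, E x y ≤ E (x * z) (y * z))
    (hreg₂ : ∀ x y z : M, E x y ≤ E (z * x) (z * y))
    (σ : M → unitInterval)
    (hσ : ∀ x, σ x = E x 1) :
    σ (1 : M) = 1 ∧ ∀ x y : M, A (σ x) (σ y) ≤ σ (x * y) := by
  constructor
  · rw [hσ, hErefl]
  · intro x y
    rw [hσ, hσ, hσ]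
    calc A (E x 1) (E y 1) ≤ A (E (x * y) y) (E y 1) := by
          have h := hreg₁ x 1 y
          rw [one_mul] at h
          exact hAmono _ _ _ _ h le_rfl
      _ ≤ E (x * y) 1 := hEtrans _ _ _
end
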